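/- arXiv:2504.02648 — 4 statements merged into one kernel-verified Lean document; each statement's English description precedes it below -/
import Mathlib

section
/- For the myopic altruistic planner with reward r(b,q) = -β(q) - C·min(b,1-b,1-q), where β is nondecreasing and concave on [p,1] with β(p)=0, C>0, and p ∈ [1/2,1): the supremum of r(b,·) over q ∈ [p,1] is attained at q = 1 if min(b, 1-b, 1-p) > β(1)/C, and at q = p otherwise. -/
/-- Myopic altruistic planner: with reward `r(b,q) = -β(q) - C·min(b,1-b,1-q)`,
`β` nondecreasing and concave on `[p,1]` with `β(p) = 0`, `C > 0`, `p ∈ [1/2,1)`,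
the supremum of `r(b,·)` over `q ∈ [p,1]` is attained at `q = 1` if
`min(b,1-b,1-p) > β(1)/C`, and at `q = p` otherwise. -/
theorem myopic_altruistic_optimum (β : ℝ → ℝ) (C p b : ℝ)
    (hβmono : MonotoneOn β (Set.Icc p 1))
    (hβconc : ConcaveOn ℝ (Set.Icc p 1) β)
    (hβp : β p = 0) (hC : 0 < C) (hp : p ∈ Set.Ico (1/2 : ℝ) 1)
    (hb : b ∈ Set.Icc (0:ℝ) 1) :
    (min b (min (1 - b) (1 - p)) > β 1 / C →
      ∀ q ∈ Set.Icc p 1,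
        -β q - C * min b (min (1 - b) (1 - q)) ≤
          -β 1 - C * min b (min (1 - b) (1 - 1))) ∧
    (min b (min (1 - b) (1 - p)) ≤ β 1 / C →
      ∀ q ∈ Set.Icc p 1,
        -β q - C * min b (min (1 - b) (1 - q)) ≤
          -β p - C * min b (min (1 - b) (1 - p))) := by
  obtain ⟨hb0, hb1⟩ := hb
  obtain ⟨hp2, hp1⟩ := hp
  have hp0 : (0:ℝ) < 1 - p := by linarith
  have hpIcc : p ∈ Set.Icc p 1 := ⟨le_refl _, hp1.le⟩
  have h1Icc : (1:ℝ) ∈ Set.Icc p 1 := ⟨hp1.le, le_refl _⟩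
  have hβ1 : 0 ≤ β 1 := by
    have := hβmono hpIcc h1Icc hp1.le
    linarith [hβp]
  set mp := min b (min (1 - b) (1 - p)) with hmp
  have hmp1p : mp ≤ 1 - p := le_trans (min_le_right _ _) (min_le_right _ _)
  have hmpm : mp ≤ min b (1 - b) :=
    le_min (min_le_left _ _) (le_trans (min_le_right _ _) (min_le_left _ _))
  -- key concavity bound: (q-p) * β 1 ≤ (1-p) * β q for q ∈ [p,1]
  have key : ∀ q ∈ Set.Icc p 1, (q - p) * β 1 ≤ (1 - p) * β q := by
    intro q hq
    obtain ⟨hqp, hq1⟩ := hq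
    have ha : (0:ℝ) ≤ (1 - q) / (1 - p) := div_nonneg (by linarith) hp0.le
    have hb' : (0:ℝ) ≤ (q - p) / (1 - p) := div_nonneg (by linarith) hp0.le
    have hab : (1 - q) / (1 - p) + (q - p) / (1 - p) = 1 := by
      rw [← add_div, div_eq_one_iff_eq hp0.ne']; ring
    have h := hβconc.2 hpIcc h1Icc ha hb' hab
    simp only [smul_eq_mul] at h
    have hcomb : (1 - q) / (1 - p) * p + (q - p) / (1 - p) * 1 = q := by
      rw [div_mul_eq_mul_div, div_mul_eq_mul_div, ← add_div,
        div_eq_iff hp0.ne']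
      ring
    rw [hcomb, hβp, mul_zero, zero_add] at h
    rw [div_mul_eq_mul_div, div_le_iff₀ hp0] at h
    linarith
  have hβq0 : ∀ q ∈ Set.Icc p 1, 0 ≤ β q := by
    intro q hq
    have := hβmono hpIcc hq hq.1
    linarith [hβp]
  constructor
  · intro h q hq
    obtain ⟨hqp, hq1⟩ := hq
    have hCmp : β 1 < C * mp := by
      rw [gt_iff_lt, div_lt_iff₀ hC] at h
      linarith [h]
    have hz : min b (min (1 - b) (1 - (1:ℝ))) = 0 := by
      rw [show (1:ℝ) - 1 = 0 by ring, min_eq_right (by linarith : (0:ℝ) ≤ 1 - b),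
        min_eq_right hb0]
    rw [hz, mul_zero]
    rcases le_total (1 - q) (min b (1 - b)) with hcase | hcase
    · -- mistake term is 1 - q
      have hm : min b (min (1 - b) (1 - q)) = 1 - q := by
        rw [le_min_iff] at hcase
        rw [min_eq_right hcase.2, min_eq_right hcase.1]
      rw [hm]
      have hk := key q ⟨hqp, hq1⟩
      nlinarith [mul_nonneg (sub_nonneg.2 hq1) (sub_nonneg.2 hCmp.le),
        mul_nonneg (mul_nonneg hC.le (sub_nonneg.2 hq1)) (sub_nonneg.2 hmp1p)]
    · -- mistake term is min b (1 - b)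
      have hm : min b (min (1 - b) (1 - q)) = min b (1 - b) := by
        rw [← min_assoc, min_eq_left hcase]
      rw [hm]
      have hβq := hβq0 q ⟨hqp, hq1⟩
      have : C * mp ≤ C * min b (1 - b) := by
        exact mul_le_mul_of_nonneg_left hmpm hC.le
      linarith
  · intro h q hq
    obtain ⟨hqp, hq1⟩ := hq
    have hCmp : C * mp ≤ β 1 := by
      rw [le_div_iff₀ hC] at h
      linarith
    rw [hβp]
    rcases le_total (1 - q) (min b (1 - b)) with hcase | hcase
    · have hm : min b (min (1 - b) (1 - q)) = 1 - q := by
        rw [le_min_iff] at hcase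
        rw [min_eq_right hcase.2, min_eq_right hcase.1]
      rw [hm]
      have hk := key q ⟨hqp, hq1⟩
      nlinarith [mul_nonneg (sub_nonneg.2 hqp) (sub_nonneg.2 hCmp),
        mul_nonneg (mul_nonneg hC.le (sub_nonneg.2 hq1)) (sub_nonneg.2 hmp1p)]
    · have hm : min b (min (1 - b) (1 - q)) = min b (1 - b) := by
        rw [← min_assoc, min_eq_left hcase]
      rw [hm]
      have hβq := hβq0 q ⟨hqp, hq1⟩
      have : C * mp ≤ C * min b (1 - b) :=
        mul_le_mul_of_nonneg_left hmpm hC.le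
      linarith
end

section
/- The myopic altruistic optimal policy is a threshold policy: with t = β(1)/C if β(1) < C(1-p) and t = 1/2 otherwise, the optimizer of r(b,q) = -β(q) - C·min(b,1-b,1-q) over q ∈ [p,1] equals 1 for b ∈ (t, 1-t) and equals p otherwise. -/
/-- Threshold form of the myopic altruistic optimal policy: with
`t = β(1)/C` if `β(1) < C(1-p)` and `t = 1/2` otherwise, the maximizer of
`r(b,q) = -β(q) - C·min(b,1-b,1-q)` over `q ∈ [p,1]` is `q = 1` for
`b ∈ (t, 1-t)` and `q = p` otherwise. -/
theorem myopic_altruistic_threshold (β : ℝ → ℝ) (C p t : ℝ)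
    (hβmono : MonotoneOn β (Set.Icc p 1))
    (hβcont : ContinuousOn β (Set.Icc p 1))
    (hβconc : ConcaveOn ℝ (Set.Icc p 1) β)
    (hβp : β p = 0) (hC : 0 < C) (hp : p ∈ Set.Ico (1/2 : ℝ) 1)
    (ht : t = if β 1 < C * (1 - p) then β 1 / C else 1/2) :
    ∀ b ∈ Set.Icc (0:ℝ) 1,
      ((t < b ∧ b < 1 - t) →
        ∀ q ∈ Set.Icc p 1,
          -β q - C * min b (min (1 - b) (1 - q)) ≤
            -β 1 - C * min b (min (1 - b) (1 - 1))) ∧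
      (¬(t < b ∧ b < 1 - t) →
        ∀ q ∈ Set.Icc p 1,
          -β q - C * min b (min (1 - b) (1 - q)) ≤
            -β p - C * min b (min (1 - b) (1 - p))) := by
  obtain ⟨hp2, hp1⟩ := hp
  have h1p : (0:ℝ) < 1 - p := by linarith
  have hpm : p ∈ Set.Icc p 1 := ⟨le_refl p, hp1.le⟩
  have h1m : (1:ℝ) ∈ Set.Icc p 1 := ⟨hp1.le, le_refl 1⟩
  have hβ1 : 0 ≤ β 1 := by
    have := hβmono hpm h1m hp1.le
    linarith
  have hβnn : ∀ q ∈ Set.Icc p 1, 0 ≤ β q := fun q hq => by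
    have := hβmono hpm hq hq.1; linarith
  have hconc : ∀ q ∈ Set.Icc p 1, (q - p) * β 1 ≤ (1 - p) * β q := by
    intro q hq
    obtain ⟨hq1, hq2⟩ := hq
    have ha : (0:ℝ) ≤ (1-q)/(1-p) := div_nonneg (by linarith) h1p.le
    have hb : (0:ℝ) ≤ (q-p)/(1-p) := div_nonneg (by linarith) h1p.le
    have hab : (1-q)/(1-p) + (q-p)/(1-p) = 1 := by
      rw [← add_div, div_eq_one_iff_eq h1p.ne']; ring
    have key := hβconc.2 hpm h1m ha hb hab
    have hpt : ((1-q)/(1-p)) • p + ((q-p)/(1-p)) • (1:ℝ) = q := by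
      rw [smul_eq_mul, smul_eq_mul, mul_one, div_mul_eq_mul_div, ← add_div,
        div_eq_iff h1p.ne']; ring
    rw [hpt, hβp] at key
    simp only [smul_eq_mul, mul_zero, zero_add] at key
    rw [div_mul_eq_mul_div, div_le_iff₀ h1p] at key
    nlinarith [key]
  intro b hb
  obtain ⟨hb0, hb1⟩ := hb
  constructor
  · rintro ⟨htb, hbt⟩ q hq
    obtain ⟨hq1, hq2⟩ := hq
    have hβq := hβnn q ⟨hq1, hq2⟩
    have hcq := hconc q ⟨hq1, hq2⟩
    have hRHS : min b (min (1 - b) (1 - 1)) = 0 := by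
      rw [show (1:ℝ) - 1 = 0 by ring,
        min_eq_right (by linarith : (0:ℝ) ≤ 1 - b), min_eq_right hb0]
    rw [hRHS, mul_zero]
    by_cases hcase : β 1 < C * (1 - p)
    · rw [if_pos hcase] at ht
      have htb' : β 1 < C * b := by
        rw [ht, div_lt_iff₀ hC] at htb; nlinarith
      have hbt' : β 1 < C * (1 - b) := by
        rw [ht] at hbt
        have h := hbt
        have : β 1 / C < 1 - b := by linarith
        rw [div_lt_iff₀ hC] at this; nlinarith
      have h3 : β 1 - β q ≤ C * (1 - q) := by
        nlinarith [hcq, mul_nonneg (by linarith : (0:ℝ) ≤ 1 - q)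
          (by linarith : (0:ℝ) ≤ C*(1-p) - β 1)]
      have h1 : β 1 - β q ≤ C * b := by linarith
      have h2 : β 1 - β q ≤ C * (1 - b) := by linarith
      have hmin : β 1 - β q ≤ C * min b (min (1-b) (1-q)) := by
        rcases min_cases b (min (1-b) (1-q)) with ⟨he, _⟩|⟨he, _⟩
        · rw [he]; exact h1
        · rw [he]
          rcases min_cases (1-b) (1-q) with ⟨he2, _⟩|⟨he2, _⟩ <;> rw [he2]
          · exact h2
          · exact h3
      linarith
    · rw [if_neg hcase] at ht
      exfalso
      rw [ht] at htb hbt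
      linarith
  · intro hnot q hq
    obtain ⟨hq1, hq2⟩ := hq
    have hβq := hβnn q ⟨hq1, hq2⟩
    have hcq := hconc q ⟨hq1, hq2⟩
    rw [hβp, ← min_assoc, ← min_assoc]
    set m := min b (1-b) with hm
    have hmb : m ≤ b := min_le_left _ _
    have hmb' : m ≤ 1 - b := min_le_right _ _
    have hm0 : 0 ≤ m := le_min hb0 (by linarith)
    by_cases hcase : β 1 < C * (1 - p)
    · rw [if_pos hcase] at ht
      push_neg at hnot
      have hmt : C * m ≤ β 1 := by
        rcases le_or_gt b t with h|h
        · have h' : m ≤ β 1 / C := by rw [← ht]; linarith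
          rw [le_div_iff₀ hC] at h'; nlinarith
        · have h2 := hnot h
          have h' : m ≤ β 1 / C := by rw [← ht]; linarith
          rw [le_div_iff₀ hC] at h'; nlinarith
      rcases min_cases m (1-p) with ⟨he, hle⟩|⟨he, hlt⟩
      · rw [he]
        rcases min_cases m (1-q) with ⟨he2, hle2⟩|⟨he2, hlt2⟩ <;> rw [he2]
        · linarith
        · nlinarith [hcq, mul_le_mul_of_nonneg_left hmt h1p.le,
            mul_nonneg (by linarith : (0:ℝ) ≤ 1-q)
              (by linarith : (0:ℝ) ≤ C*(1-p) - β 1)]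
      · nlinarith [mul_lt_mul_of_pos_left hlt hC]
    · rw [if_neg hcase] at ht
      push_neg at hcase
      have h5 : C*(q-p) ≤ β q := by
        have hint : 0 ≤ (q-p)*(β 1 - C*(1-p)) :=
          mul_nonneg (by linarith) (by linarith)
        have h4 : (1-p)*(C*(q-p)) ≤ (1-p)*(β q) := by nlinarith [hcq, hint]
        exact le_of_mul_le_mul_left h4 h1p
      rcases min_cases m (1-p) with ⟨he, hle⟩|⟨he, hlt⟩ <;> rw [he] <;>
        rcases min_cases m (1-q) with ⟨he2, hle2⟩|⟨he2, hlt2⟩ <;> rw [he2]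
      · linarith
      · linarith [h5, mul_le_mul_of_nonneg_left hle hC.le]
      · linarith [mul_le_mul_of_nonneg_left hlt.le hC.le]
      · linarith [h5]
end

section
/- For the biased planner's instantaneous reward r_B(b,q) defined as -β(|q-p|) - C·z(b,q) when q ≥ max(b,1-b), as -β(|q-p|) - C when b < 1-q, and as -β(|q-p|) when b > q (with z(b,q)=b+q-2bq): for b ∈ (p,1], the unique maximizer over q ∈ [1/2,1] is q = p, with optimal value 0. -/
/-- The biased planner's instantaneous reward. -/
noncomputable def rB (β : ℝ → ℝ) (C p b q : ℝ) : ℝ :=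
  if max b (1 - b) ≤ q then -β |q - p| - C * (b + q - 2*b*q)
  else if b < 1 - q then -β |q - p| - C
  else -β |q - p|

/-- For beliefs `b ∈ (p,1]`, the unique maximizer of the biased myopic reward over
`q ∈ [1/2,1]` is `q = p`, with optimal value `0`. -/
theorem biased_myopic_high_belief (β : ℝ → ℝ) (C p : ℝ)
    (hβmono : MonotoneOn β (Set.Icc (0:ℝ) (1/2)))
    (hβcont : ContinuousOn β (Set.Icc (0:ℝ) (1/2)))
    (hβconc : ConcaveOn ℝ (Set.Icc (0:ℝ) (1/2)) β)
    (hβ0 : β 0 = 0) (hβpos : ∀ x ∈ Set.Ioc (0:ℝ) (1/2), 0 < β x)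
    (hC : 0 < C) (hp : p ∈ Set.Icc (1/2 : ℝ) 1)
    (b : ℝ) (hb : b ∈ Set.Ioc p 1) :
    rB β C p b p = 0 ∧
    ∀ q ∈ Set.Icc (1/2 : ℝ) 1, q ≠ p → rB β C p b q < rB β C p b p := by
  obtain ⟨hp1, hp2⟩ := hp
  obtain ⟨hb1, hb2⟩ := hb
  have hbhalf : (1/2 : ℝ) < b := lt_of_le_of_lt hp1 hb1
  have h0 : rB β C p b p = 0 := by
    unfold rB
    rw [if_neg, if_neg]
    · simp [hβ0]
    · linarith
    · intro h
      exact absurd (le_trans (le_max_left _ _) h) (not_le.2 hb1)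
  refine ⟨h0, fun q hq hqp => ?_⟩
  obtain ⟨hq1, hq2⟩ := hq
  have habs : |q - p| ∈ Set.Ioc (0:ℝ) (1/2) := by
    refine ⟨abs_pos.2 (sub_ne_zero.2 hqp), abs_le.2 ⟨by linarith, by linarith⟩⟩
  have hβq := hβpos _ habs
  rw [h0]
  unfold rB
  split_ifs with h1 h2
  · have hz : 0 ≤ b + q - 2*b*q := by nlinarith
    nlinarith [mul_nonneg hC.le hz]
  · linarith
  · linarith
end

section
/- For the biased myopic planner with b ∈ [0, 1-p): the maximizer of r_B(b,·) over q ∈ [1/2,1] lies in {p, 1-b}. In particular, precision 1 is dominated by precision 1-b: r_B(b,1) ≤ r_B(b,1-b). -/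
/-- For `b ∈ [0, 1-p)`, the biased myopic optimum over `q ∈ [1/2,1]` is attained
within `{p, 1-b}`; in particular precision `1` is dominated by `1-b`. -/
theorem biased_myopic_low_belief (β : ℝ → ℝ) (C p : ℝ)
    (hβmono : MonotoneOn β (Set.Icc (0:ℝ) (1/2)))
    (hβconc : ConcaveOn ℝ (Set.Icc (0:ℝ) (1/2)) β)
    (hβ0 : β 0 = 0) (hC : 0 < C) (hp : p ∈ Set.Ioc (1/2 : ℝ) 1)
    (b : ℝ) (hb : b ∈ Set.Ico (0:ℝ) (1 - p)) :
    (∃ qstar ∈ ({p, 1 - b} : Set ℝ),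
        ∀ q ∈ Set.Icc (1/2 : ℝ) 1, rB β C p b q ≤ rB β C p b qstar) ∧
    rB β C p b 1 ≤ rB β C p b (1 - b) := by
  obtain ⟨hp1, hp2⟩ := hp
  obtain ⟨hb0, hb1⟩ := hb
  have hb2 : b < 1/2 := by linarith
  have hmax : max b (1 - b) = 1 - b := max_eq_right (by linarith)
  have hplt : p < 1 - b := by linarith
  -- value at p
  have hrp : rB β C p b p = -C := by
    rw [rB, hmax, if_neg (by linarith), if_pos (by linarith)]
    simp [hβ0]
  -- value on the upper branch
  have hupper : ∀ q, 1 - b ≤ q → rB β C p b q = -β (q - p) - C * (b + q - 2*b*q) := by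
    intro q hq
    rw [rB, hmax, if_pos hq, abs_of_nonneg (by linarith)]
  -- monotone decrease on [1-b, 1]
  have hdec : ∀ q, 1 - b ≤ q → q ≤ 1 → rB β C p b q ≤ rB β C p b (1 - b) := by
    intro q hq hq1
    rw [hupper q hq, hupper (1 - b) le_rfl]
    have hβle : β (1 - b - p) ≤ β (q - p) := by
      apply hβmono ⟨by linarith, by linarith⟩ ⟨by linarith, by linarith⟩ (by linarith)
    have hz : C * (b + (1 - b) - 2*b*(1 - b)) ≤ C * (b + q - 2*b*q) := by
      apply mul_le_mul_of_nonneg_left _ hC.le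
      nlinarith
    linarith
  -- lower branch bounded by -C
  have hlow : ∀ q, 1/2 ≤ q → q < 1 - b → rB β C p b q ≤ -C := by
    intro q hq hq1
    rw [rB, hmax, if_neg (by linarith), if_pos (by linarith)]
    have h1 : |q - p| ≤ 1/2 := abs_le.mpr ⟨by linarith, by linarith⟩
    have h2 : β 0 ≤ β |q - p| :=
      hβmono ⟨le_rfl, by norm_num⟩ ⟨abs_nonneg _, h1⟩ (abs_nonneg _)
    rw [hβ0] at h2
    linarith
  refine ⟨?_, hdec 1 (by linarith) le_rfl⟩
  by_cases hcmp : rB β C p b (1 - b) ≤ -C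
  · refine ⟨p, Or.inl rfl, ?_⟩
    intro q ⟨hq1, hq2⟩
    rw [hrp]
    by_cases hqb : 1 - b ≤ q
    · exact le_trans (hdec q hqb hq2) hcmp
    · exact hlow q hq1 (by linarith)
  · refine ⟨1 - b, Or.inr rfl, ?_⟩
    intro q ⟨hq1, hq2⟩
    by_cases hqb : 1 - b ≤ q
    · exact hdec q hqb hq2
    · exact le_trans (hlow q hq1 (by linarith)) (by linarith)
end
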